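/- For every finite simple graph G without isolated vertices, without open twins and without closed twins, G has an FTD-code and the FTD-number of G is at most the F-number of G plus one, i.e., γ^FTD(G) ≤ γ^F(G) + 1. -/

import Mathlib

open Finset

namespace SepDom

variable {V : Type*} [Fintype V] [DecidableEq V]

/-- The closed neighborhood `N[v]` of a vertex as a `Finset`. -/
def closedNbhd (G : SimpleGraph V) [DecidableRel G.Adj] (v : V) : Finset V :=
  insert v (G.neighborFinset v)

/-- `C` is a dominating set: `N[v] ∩ C ≠ ∅` for all `v`. -/
def IsDomSet (G : SimpleGraph V) [DecidableRel G.Adj] (C : Finset V) : Prop :=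
  ∀ v : V, (closedNbhd G v ∩ C).Nonempty

/-- `C` is a total-dominating set: `N(v) ∩ C ≠ ∅` for all `v`. -/
def IsTotalDomSet (G : SimpleGraph V) [DecidableRel G.Adj] (C : Finset V) : Prop :=
  ∀ v : V, (G.neighborFinset v ∩ C).Nonempty

/-- `C` is a locating set (L-set): the sets `N(v) ∩ C`, `v ∉ C`, are pairwise distinct. -/
def IsLSet (G : SimpleGraph V) [DecidableRel G.Adj] (C : Finset V) : Prop :=
  ∀ u ∉ C, ∀ v ∉ C, G.neighborFinset u ∩ C = G.neighborFinset v ∩ C → u = v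

/-- `C` is an open-separating set (O-set): the sets `N(v) ∩ C` are pairwise distinct. -/
def IsOSet (G : SimpleGraph V) [DecidableRel G.Adj] (C : Finset V) : Prop :=
  ∀ u v : V, G.neighborFinset u ∩ C = G.neighborFinset v ∩ C → u = v

/-- `C` is a closed-separating set (I-set): the sets `N[v] ∩ C` are pairwise distinct. -/
def IsISet (G : SimpleGraph V) [DecidableRel G.Adj] (C : Finset V) : Prop :=
  ∀ u v : V, closedNbhd G u ∩ C = closedNbhd G v ∩ C → u = v

/-- `C` is a full-separating set (F-set): both open- and closed-separating. -/
def IsFSet (G : SimpleGraph V) [DecidableRel G.Adj] (C : Finset V) : Prop :=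
  IsOSet G C ∧ IsISet G C

/-- `G` has open twins: distinct non-adjacent vertices with equal open neighborhoods. -/
def HasOpenTwins (G : SimpleGraph V) [DecidableRel G.Adj] : Prop :=
  ∃ u v : V, u ≠ v ∧ ¬ G.Adj u v ∧ G.neighborFinset u = G.neighborFinset v

/-- `G` has closed twins: distinct adjacent vertices with equal closed neighborhoods. -/
def HasClosedTwins (G : SimpleGraph V) [DecidableRel G.Adj] : Prop :=
  ∃ u v : V, u ≠ v ∧ G.Adj u v ∧ closedNbhd G u = closedNbhd G v

/-- `G` has an isolated vertex: a vertex with empty open neighborhood. -/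
def HasIsolated (G : SimpleGraph V) [DecidableRel G.Adj] : Prop :=
  ∃ v : V, G.neighborFinset v = ∅

/-- The L-number: minimum cardinality of an L-set. -/
noncomputable def lNum (G : SimpleGraph V) [DecidableRel G.Adj] : ℕ :=
  sInf {n | ∃ C : Finset V, IsLSet G C ∧ C.card = n}

/-- The O-number: minimum cardinality of an O-set. -/
noncomputable def oNum (G : SimpleGraph V) [DecidableRel G.Adj] : ℕ :=
  sInf {n | ∃ C : Finset V, IsOSet G C ∧ C.card = n}

/-- The I-number: minimum cardinality of an I-set. -/
noncomputable def iNum (G : SimpleGraph V) [DecidableRel G.Adj] : ℕ :=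
  sInf {n | ∃ C : Finset V, IsISet G C ∧ C.card = n}

/-- The F-number: minimum cardinality of an F-set. -/
noncomputable def fNum (G : SimpleGraph V) [DecidableRel G.Adj] : ℕ :=
  sInf {n | ∃ C : Finset V, IsFSet G C ∧ C.card = n}

/-- The LD-number: minimum cardinality of an LD-code. -/
noncomputable def ldNum (G : SimpleGraph V) [DecidableRel G.Adj] : ℕ :=
  sInf {n | ∃ C : Finset V, IsDomSet G C ∧ IsLSet G C ∧ C.card = n}

/-- The OD-number: minimum cardinality of an OD-code. -/
noncomputable def odNum (G : SimpleGraph V) [DecidableRel G.Adj] : ℕ :=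
  sInf {n | ∃ C : Finset V, IsDomSet G C ∧ IsOSet G C ∧ C.card = n}

/-- The ID-number: minimum cardinality of an ID-code. -/
noncomputable def idNum (G : SimpleGraph V) [DecidableRel G.Adj] : ℕ :=
  sInf {n | ∃ C : Finset V, IsDomSet G C ∧ IsISet G C ∧ C.card = n}

/-- The FD-number: minimum cardinality of an FD-code. -/
noncomputable def fdNum (G : SimpleGraph V) [DecidableRel G.Adj] : ℕ :=
  sInf {n | ∃ C : Finset V, IsDomSet G C ∧ IsFSet G C ∧ C.card = n}

/-- The LTD-number: minimum cardinality of an LTD-code. -/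
noncomputable def ltdNum (G : SimpleGraph V) [DecidableRel G.Adj] : ℕ :=
  sInf {n | ∃ C : Finset V, IsTotalDomSet G C ∧ IsLSet G C ∧ C.card = n}

/-- The OTD-number: minimum cardinality of an OTD-code. -/
noncomputable def otdNum (G : SimpleGraph V) [DecidableRel G.Adj] : ℕ :=
  sInf {n | ∃ C : Finset V, IsTotalDomSet G C ∧ IsOSet G C ∧ C.card = n}

/-- The ITD-number: minimum cardinality of an ITD-code. -/
noncomputable def itdNum (G : SimpleGraph V) [DecidableRel G.Adj] : ℕ :=
  sInf {n | ∃ C : Finset V, IsTotalDomSet G C ∧ IsISet G C ∧ C.card = n}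

/-- The FTD-number: minimum cardinality of an FTD-code. -/
noncomputable def ftdNum (G : SimpleGraph V) [DecidableRel G.Adj] : ℕ :=
  sInf {n | ∃ C : Finset V, IsTotalDomSet G C ∧ IsFSet G C ∧ C.card = n}

end SepDom

open SepDom

lemma fset_mono {V : Type*} [Fintype V] [DecidableEq V]
    (G : SimpleGraph V) [DecidableRel G.Adj]
    {C C' : Finset V} (h : C ⊆ C') (hF : IsFSet G C) : IsFSet G C' := by
  obtain ⟨hO, hI⟩ := hF
  constructor
  · intro u v huv
    apply hO u v
    have := congrArg (· ∩ C) huv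
    simpa [Finset.inter_assoc, Finset.inter_eq_right.mpr h] using this
  · intro u v huv
    apply hI u v
    have := congrArg (· ∩ C) huv
    simpa [Finset.inter_assoc, Finset.inter_eq_right.mpr h] using this

lemma univ_fset {V : Type*} [Fintype V] [DecidableEq V]
    (G : SimpleGraph V) [DecidableRel G.Adj]
    (hOT : ¬ HasOpenTwins G) (hCT : ¬ HasClosedTwins G) :
    IsFSet G (Finset.univ : Finset V) := by
  constructor
  · intro u v h
    simp only [Finset.inter_univ] at h
    by_contra hne
    by_cases hadj : G.Adj u v
    · have : u ∈ G.neighborFinset v := by simpa using hadj.symm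
      rw [← h] at this
      simp at this
    · exact hOT ⟨u, v, hne, hadj, h⟩
  · intro u v h
    simp only [Finset.inter_univ] at h
    by_contra hne
    by_cases hadj : G.Adj u v
    · exact hCT ⟨u, v, hne, hadj, h⟩
    · have hu : u ∈ closedNbhd G v := by
        rw [← h]; simp [closedNbhd]
      simp only [closedNbhd, Finset.mem_insert, SimpleGraph.mem_neighborFinset] at hu
      rcases hu with h1 | h2
      · exact hne h1
      · exact hadj h2.symm

lemma exists_ftd_of_fset {V : Type*} [Fintype V] [DecidableEq V]
    (G : SimpleGraph V) [DecidableRel G.Adj]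
    (hIso : ¬ HasIsolated G) {C : Finset V} (hF : IsFSet G C) :
    ∃ C' : Finset V, IsTotalDomSet G C' ∧ IsFSet G C' ∧ C'.card ≤ C.card + 1 := by
  by_cases hT : IsTotalDomSet G C
  · exact ⟨C, hT, hF, Nat.le_succ _⟩
  · simp only [IsTotalDomSet] at hT
    push_neg at hT
    obtain ⟨v0, hv0⟩ := hT
    have hne : (G.neighborFinset v0).Nonempty := by
      rw [Finset.nonempty_iff_ne_empty]
      exact fun h => hIso ⟨v0, h⟩
    obtain ⟨w, hw⟩ := hne
    refine ⟨insert w C, ?_, fset_mono G (Finset.subset_insert _ _) hF, ?_⟩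
    · intro v
      by_cases hv : (G.neighborFinset v ∩ C).Nonempty
      · obtain ⟨x, hx⟩ := hv
        rw [Finset.mem_inter] at hx
        exact ⟨x, Finset.mem_inter.mpr ⟨hx.1, Finset.mem_insert_of_mem hx.2⟩⟩
      · rw [Finset.not_nonempty_iff_eq_empty] at hv
        have : v = v0 := hF.1 v v0 (by rw [hv, hv0])
        subst this
        exact ⟨w, Finset.mem_inter.mpr ⟨hw, Finset.mem_insert_self _ _⟩⟩
    · exact (Finset.card_insert_le _ _).trans (by omega)

theorem ftd_le_f_add_one {V : Type*} [Fintype V] [DecidableEq V]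
    (G : SimpleGraph V) [DecidableRel G.Adj]
    (hIso : ¬ HasIsolated G) (hOT : ¬ HasOpenTwins G) (hCT : ¬ HasClosedTwins G) :
    (∃ C : Finset V, IsTotalDomSet G C ∧ IsFSet G C) ∧ ftdNum G ≤ fNum G + 1 := by
  have hSne : {n | ∃ C : Finset V, IsFSet G C ∧ C.card = n}.Nonempty :=
    ⟨(Finset.univ : Finset V).card, Finset.univ, univ_fset G hOT hCT, rfl⟩
  obtain ⟨C, hFC, hcard⟩ := Nat.sInf_mem hSne
  obtain ⟨C', hT', hF', hc'⟩ := exists_ftd_of_fset G hIso hFC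
  refine ⟨⟨C', hT', hF'⟩, ?_⟩
  calc ftdNum G ≤ C'.card := Nat.sInf_le ⟨C', hT', hF', rfl⟩
    _ ≤ C.card + 1 := hc'
    _ = fNum G + 1 := by rw [hcard]; rfl
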